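/- There exists a norm ‖·‖ on c₀₀ satisfying equation (2.2), i.e. ‖x‖ = max{ ‖x‖_∞, sup{ (1/f(ℓ)) ∑_{i=1}^ℓ |||E_i x|||_{m_i} : ℓ ∈ ℕ, ((m_i, E_i))_{i=1}^ℓ admissible } } for every x ∈ c₀₀, where |||x|||_m = sup{ (1/m) ∑_{i=1}^m ‖F_i x‖ : F₁ < ⋯ < F_m } for m ≥ 2. Moreover for this norm ‖e_i‖ = 1 for all i, and the norm is 1-unconditional and 1-subsymmetric: ‖∑_i ε_i a_i e_{k_i}‖ = ‖∑_i a_i e_i‖ for all x = ∑ a_i e_i ∈ c₀₀, signs ε_i ∈ {−1,1} and strictly increasing indices k₁ < k₂ < ⋯. -/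

import Mathlib

open Finset

/-- `c₀₀`: finitely supported functions `ℕ → ℝ`. -/
abbrev C00 := ℕ →₀ ℝ

/-- `f(t) = log₂(1+t)`. -/
noncomputable def f (t : ℝ) : ℝ := Real.logb 2 (1 + t)

/-- `E < F` for finite sets: every element of `E` is less than every element of `F`. -/
def FinsetLT (E F : Finset ℕ) : Prop := ∀ i ∈ E, ∀ j ∈ F, i < j

/-- `Ex`: coordinatewise product of `x` with the indicator of `E`. -/
noncomputable def restr (E : Finset ℕ) (x : C00) : C00 := x.filter (· ∈ E)

/-- `N` is a norm on `c₀₀`. -/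
def IsNorm (N : C00 → ℝ) : Prop :=
  (∀ x y, N (x + y) ≤ N x + N y) ∧
  (∀ (c : ℝ) (x), N (c • x) = |c| * N x) ∧
  (∀ x, x ≠ 0 → 0 < N x)

/-- the sup norm `‖x‖_∞`. -/
noncomputable def supNorm (x : C00) : ℝ := ⨆ i, |x i|

/-- `((m_i, E_i))_{i=1}^ℓ` is admissible: `2 ≤ m₁ < ⋯ < m_ℓ`, `E₁ < ⋯ < E_ℓ`,
and `f(m_{i+1}) > ∑_{j=1}^i |E_j|`. -/
def Admissible (ℓ : ℕ) (m : Fin ℓ → ℕ) (E : Fin ℓ → Finset ℕ) : Prop :=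
  (∀ i, 2 ≤ m i) ∧ StrictMono m ∧
  (∀ i j : Fin ℓ, i < j → FinsetLT (E i) (E j)) ∧
  ∀ i j : Fin ℓ, (i : ℕ) + 1 = (j : ℕ) →
    (∑ t ∈ Finset.Iic i, ((E t).card : ℝ)) < f (m j)

/-- `|||x|||_m = sup{(1/m) ∑_{i=1}^m ‖F_i x‖ : F₁ < ⋯ < F_m}`. -/
noncomputable def tnorm (N : C00 → ℝ) (m : ℕ) (x : C00) : ℝ :=
  sSup {r | ∃ F : Fin m → Finset ℕ,
    (∀ i j : Fin m, i < j → FinsetLT (F i) (F j)) ∧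
    r = (1 / (m : ℝ)) * ∑ i, N (restr (F i) x)}

/-- `‖x‖_ℓ = sup{(1/f(ℓ)) ∑_{i=1}^ℓ |||E_i x|||_{m_i} : ((m_i,E_i))_{i=1}^ℓ admissible}`. -/
noncomputable def normL (N : C00 → ℝ) (ℓ : ℕ) (x : C00) : ℝ :=
  sSup {r | ∃ (m : Fin ℓ → ℕ) (E : Fin ℓ → Finset ℕ), Admissible ℓ m E ∧
    r = (1 / f ℓ) * ∑ i, tnorm N (m i) (restr (E i) x)}

/-- `‖x‖_{(ℓ,m₀)}`: as `‖x‖_ℓ` but restricted to admissible families with `m₁ ≥ m₀`. -/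
noncomputable def normLM (N : C00 → ℝ) (ℓ m₀ : ℕ) (x : C00) : ℝ :=
  sSup {r | ∃ (m : Fin ℓ → ℕ) (E : Fin ℓ → Finset ℕ), Admissible ℓ m E ∧
    (∀ i, m₀ ≤ m i) ∧
    r = (1 / f ℓ) * ∑ i, tnorm N (m i) (restr (E i) x)}

/-- Equation (2.2):
`‖x‖ = max{‖x‖_∞, sup{(1/f(ℓ)) ∑ |||E_i x|||_{m_i} : ℓ ∈ ℕ, ((m_i,E_i)) admissible}}`. -/
def Eq22 (N : C00 → ℝ) : Prop :=
  ∀ x, N x = max (supNorm x)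
    (sSup {r | ∃ (ℓ : ℕ) (m : Fin ℓ → ℕ) (E : Fin ℓ → Finset ℕ), Admissible ℓ m E ∧
      r = (1 / f ℓ) * ∑ i, tnorm N (m i) (restr (E i) x)})

/-- A finite block basis: nonzero vectors with successive supports. -/
def BlockSeqFin {n : ℕ} (y : Fin n → C00) : Prop :=
  (∀ i, y i ≠ 0) ∧ ∀ i j : Fin n, i < j → FinsetLT (y i).support (y j).support

/-- An infinite block basis of `(e_i)`: nonzero vectors with successive supports. -/
def BlockSeqInf (y : ℕ → C00) : Prop :=
  (∀ i, y i ≠ 0) ∧ ∀ i, FinsetLT (y i).support (y (i + 1)).support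

/-- `(z_k)_{k=1}^n` is a (finite) block basis of `(y_i)`. -/
def FiniteBlockOf {n : ℕ} (z : Fin n → C00) (y : ℕ → C00) : Prop :=
  ∃ (B : Fin n → Finset ℕ) (c : ℕ → ℝ),
    (∀ k k' : Fin n, k < k' → FinsetLT (B k) (B k')) ∧
    (∀ k, z k = ∑ i ∈ B k, c i • y i) ∧ ∀ k, z k ≠ 0

/-- `x` is an `ℓ_p^k`-average with constant `C`. -/
def IsLpAverage (N : C00 → ℝ) (p : ℝ) (k : ℕ) (C : ℝ) (x : C00) : Prop :=
  ∃ y : Fin k → C00, BlockSeqFin y ∧ (∀ i, N (y i) = 1) ∧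
    (∀ a : Fin k → ℝ,
      C⁻¹ * (∑ i, |a i| ^ p) ^ (1 / p) ≤ N (∑ i, a i • y i) ∧
      N (∑ i, a i • y i) ≤ C * (∑ i, |a i| ^ p) ^ (1 / p)) ∧
    x = ((k : ℝ) ^ (-(1 / p))) • ∑ i, y i

/-- `C_p = 4(1 - 2^{-1/p})⁻¹`. -/
noncomputable def Cp (p : ℝ) : ℝ := 4 * (1 - (2 : ℝ) ^ (-(1 / p)))⁻¹

/-! ### Auxiliary development -/

/-- The map `x ↦ ∑ εᵢ xᵢ e_{κ i}`. -/
noncomputable def Tmap (ε : ℕ → ℝ) (κ : ℕ → ℕ) (x : C00) : C00 :=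
  ∑ i ∈ x.support, (ε i * x i) • Finsupp.single (κ i) (1 : ℝ)

/-- The `ℓ¹` norm. -/
noncomputable def L1 (x : C00) : ℝ := ∑ i ∈ x.support, |x i|

/-- The operator whose fixed point we seek; its value is literally the RHS of (2.2). -/
noncomputable def PhiN (N : C00 → ℝ) (x : C00) : ℝ :=
  max (supNorm x)
    (sSup {r | ∃ (ℓ : ℕ) (m : Fin ℓ → ℕ) (E : Fin ℓ → Finset ℕ), Admissible ℓ m E ∧
      r = (1 / f ℓ) * ∑ i, tnorm N (m i) (restr (E i) x)})

/-! #### restr lemmas -/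

lemma restr_apply (E : Finset ℕ) (x : C00) (j : ℕ) :
    restr E x j = if j ∈ E then x j else 0 := Finsupp.filter_apply _ _ _

lemma restr_empty (x : C00) : restr ∅ x = 0 := by
  ext j; simp [restr_apply]

lemma restr_zero (E : Finset ℕ) : restr E (0 : C00) = 0 := by
  ext j; simp [restr_apply]

lemma restr_add (E : Finset ℕ) (x y : C00) : restr E (x + y) = restr E x + restr E y :=
  Finsupp.filter_add

lemma restr_smul (E : Finset ℕ) (c : ℝ) (x : C00) : restr E (c • x) = c • restr E x :=
  Finsupp.filter_smul

lemma restr_congr {A B : Finset ℕ} {x : C00} (h : ∀ i, x i ≠ 0 → (i ∈ A ↔ i ∈ B)) :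
    restr A x = restr B x := by
  ext j
  rw [restr_apply, restr_apply]
  by_cases hx : x j = 0
  · split_ifs <;> simp [hx]
  · rw [if_congr (h j hx) rfl rfl]

/-! #### L1 lemmas -/

lemma L1_nonneg (x : C00) : 0 ≤ L1 x := Finset.sum_nonneg fun i _ => abs_nonneg _

lemma abs_le_L1 (x : C00) (i : ℕ) : |x i| ≤ L1 x := by
  by_cases h : i ∈ x.support
  · exact Finset.single_le_sum (fun j _ => abs_nonneg (x j)) h
  · rw [Finsupp.notMem_support_iff.mp h, abs_zero]; exact L1_nonneg x

lemma L1_restr (E : Finset ℕ) (x : C00) :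
    L1 (restr E x) = ∑ i ∈ x.support.filter (· ∈ E), |x i| := by
  unfold L1
  rw [show (restr E x).support = x.support.filter (· ∈ E) from Finsupp.support_filter _ _]
  refine Finset.sum_congr rfl fun i hi => ?_
  rw [restr_apply, if_pos (Finset.mem_filter.mp hi).2]

lemma L1_restr_le (E : Finset ℕ) (x : C00) : L1 (restr E x) ≤ L1 x := by
  rw [L1_restr]
  exact Finset.sum_le_sum_of_subset_of_nonneg (Finset.filter_subset _ _)
    (fun i _ _ => abs_nonneg _)

lemma L1_restr_sum_le {n : ℕ} (F : Fin n → Finset ℕ)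
    (hF : ∀ i j : Fin n, i < j → FinsetLT (F i) (F j)) (x : C00) :
    ∑ i, L1 (restr (F i) x) ≤ L1 x := by
  have h1 : ∑ i, L1 (restr (F i) x) = ∑ i, ∑ t ∈ x.support.filter (· ∈ F i), |x t| :=
    Finset.sum_congr rfl fun i _ => L1_restr _ _
  have hdisj : (↑(Finset.univ : Finset (Fin n)) : Set (Fin n)).PairwiseDisjoint
      (fun i => x.support.filter (· ∈ F i)) := by
    intro i _ j _ hne
    refine Finset.disjoint_left.mpr fun t ht ht' => ?_
    have h1 := (Finset.mem_filter.mp ht).2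
    have h2 := (Finset.mem_filter.mp ht').2
    rcases hne.lt_or_gt with h | h
    · exact lt_irrefl t (hF i j h t h1 t h2)
    · exact lt_irrefl t (hF j i h t h2 t h1)
  rw [h1, ← Finset.sum_biUnion hdisj]
  refine Finset.sum_le_sum_of_subset_of_nonneg ?_ (fun i _ _ => abs_nonneg _)
  exact Finset.biUnion_subset.mpr fun i _ => Finset.filter_subset _ _

/-! #### supNorm lemmas -/

lemma supNorm_bdd (x : C00) : BddAbove (Set.range fun i => |x i|) :=
  ⟨L1 x, by rintro r ⟨i, rfl⟩; exact abs_le_L1 x i⟩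

lemma abs_le_supNorm (x : C00) (i : ℕ) : |x i| ≤ supNorm x := le_ciSup (supNorm_bdd x) i

lemma supNorm_nonneg (x : C00) : 0 ≤ supNorm x :=
  le_trans (abs_nonneg _) (abs_le_supNorm x 0)

lemma supNorm_le_L1 (x : C00) : supNorm x ≤ L1 x := ciSup_le (abs_le_L1 x)

lemma supNorm_zero : supNorm (0 : C00) = 0 := by
  unfold supNorm
  simp only [Finsupp.coe_zero, Pi.zero_apply, abs_zero]
  exact ciSup_const

lemma supNorm_add (x y : C00) : supNorm (x + y) ≤ supNorm x + supNorm y := by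
  refine ciSup_le fun i => ?_
  calc |(x + y) i| = |x i + y i| := by rw [Finsupp.add_apply]
    _ ≤ |x i| + |y i| := abs_add_le _ _
    _ ≤ _ := add_le_add (abs_le_supNorm x i) (abs_le_supNorm y i)

lemma supNorm_smul (c : ℝ) (x : C00) : supNorm (c • x) = |c| * supNorm x := by
  refine le_antisymm (ciSup_le fun i => ?_) ?_
  · rw [Finsupp.smul_apply, smul_eq_mul, abs_mul]
    exact mul_le_mul_of_nonneg_left (abs_le_supNorm x i) (abs_nonneg c)
  · rcases eq_or_ne c 0 with rfl | hc
    · rw [abs_zero, zero_mul]; exact supNorm_nonneg _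
    · have hc' : 0 < |c| := abs_pos.2 hc
      have h1 : supNorm x ≤ |c|⁻¹ * supNorm (c • x) := by
        refine ciSup_le fun i => ?_
        have h2 := abs_le_supNorm (c • x) i
        rw [Finsupp.smul_apply, smul_eq_mul, abs_mul] at h2
        calc |x i| = |c|⁻¹ * (|c| * |x i|) := by field_simp
          _ ≤ _ := mul_le_mul_of_nonneg_left h2 (by positivity)
      calc |c| * supNorm x ≤ |c| * (|c|⁻¹ * supNorm (c • x)) :=
            mul_le_mul_of_nonneg_left h1 (abs_nonneg c)
        _ = supNorm (c • x) := by field_simp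

lemma supNorm_pos {x : C00} (h : x ≠ 0) : 0 < supNorm x := by
  obtain ⟨i, hi⟩ : ∃ i, x i ≠ 0 := by
    by_contra hc; push_neg at hc
    exact h (Finsupp.ext hc)
  exact lt_of_lt_of_le (abs_pos.2 hi) (abs_le_supNorm x i)

lemma supNorm_single (i : ℕ) : supNorm (Finsupp.single i (1 : ℝ)) = 1 := by
  refine le_antisymm (ciSup_le fun j => ?_) ?_
  · rw [Finsupp.single_apply]
    split_ifs <;> simp
  · have h := abs_le_supNorm (Finsupp.single i (1 : ℝ)) i
    simpa using h

lemma L1_single (i : ℕ) : L1 (Finsupp.single i (1 : ℝ)) = 1 := by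
  unfold L1
  rw [Finsupp.support_single_ne_zero i one_ne_zero]
  simp

/-! #### f lemmas -/

lemma f_nat_nonneg (ℓ : ℕ) : 0 ≤ f ℓ :=
  Real.logb_nonneg one_lt_two (by { exact le_add_of_nonneg_right (Nat.cast_nonneg ℓ) } )

lemma one_le_f {ℓ : ℕ} (h : 1 ≤ ℓ) : 1 ≤ f ℓ := by
  rw [show (1 : ℝ) = Real.logb 2 2 by simp]
  unfold f
  refine Real.logb_le_logb_of_le one_lt_two (by norm_num) ?_
  have : (1 : ℝ) ≤ (ℓ : ℝ) := by exact_mod_cast h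
  linarith

lemma one_div_f_nonneg (ℓ : ℕ) : 0 ≤ 1 / f ℓ := div_nonneg zero_le_one (f_nat_nonneg ℓ)

lemma one_div_f_le_one (ℓ : ℕ) : 1 / f ℓ ≤ 1 := by
  rcases Nat.eq_zero_or_pos ℓ with rfl | h
  · norm_num [f]
  · exact div_le_one_of_le₀ (one_le_f h) (f_nat_nonneg ℓ)

lemma hom_zero {M : C00 → ℝ} (hhom : ∀ (c : ℝ) (y : C00), M (c • y) = |c| * M y) :
    M 0 = 0 := by
  have h := hhom 0 0
  rwa [zero_smul, abs_zero, zero_mul] at h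
/-! #### Tmap lemmas -/

lemma Tmap_apply_kappa {κ : ℕ → ℕ} (hκ : Function.Injective κ) (ε : ℕ → ℝ) (x : C00)
    (t : ℕ) : Tmap ε κ x (κ t) = ε t * x t := by
  unfold Tmap
  rw [Finsupp.finset_sum_apply]
  have h : ∀ i ∈ x.support,
      ((ε i * x i) • Finsupp.single (κ i) (1 : ℝ)) (κ t) = if i = t then ε i * x i else 0 := by
    intro i _
    rw [Finsupp.smul_apply, Finsupp.single_apply]
    by_cases hit : i = t
    · rw [if_pos (by rw [hit]), if_pos hit, smul_eq_mul, mul_one]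
    · rw [if_neg (fun hcon => hit (hκ hcon)), if_neg hit, smul_zero]
  rw [Finset.sum_congr rfl h, Finset.sum_ite_eq' x.support t _]
  split_ifs with ht
  · rfl
  · rw [Finsupp.notMem_support_iff.mp ht, mul_zero]

lemma Tmap_apply_notin {κ : ℕ → ℕ} {j : ℕ} (h : ∀ t, κ t ≠ j) (ε : ℕ → ℝ) (x : C00) :
    Tmap ε κ x j = 0 := by
  unfold Tmap
  rw [Finsupp.finset_sum_apply]
  refine Finset.sum_eq_zero fun i _ => ?_
  rw [Finsupp.smul_apply, Finsupp.single_apply, if_neg (h i), smul_zero]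

lemma restr_Tmap {κ : ℕ → ℕ} (hκ : Function.Injective κ) (ε : ℕ → ℝ) (B : Finset ℕ)
    (x : C00) :
    restr B (Tmap ε κ x) = Tmap ε κ (restr (x.support.filter (fun t => κ t ∈ B)) x) := by
  set G := x.support.filter (fun t => κ t ∈ B) with hG
  ext j
  rw [restr_apply]
  by_cases hj : ∃ t, κ t = j
  · obtain ⟨t, rfl⟩ := hj
    rw [Tmap_apply_kappa hκ, Tmap_apply_kappa hκ, restr_apply]
    by_cases h1 : κ t ∈ B
    · rw [if_pos h1]
      by_cases h2 : t ∈ G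
      · rw [if_pos h2]
      · rw [if_neg h2]
        have hxt : x t = 0 := by
          by_contra hxt
          exact h2 (Finset.mem_filter.mpr ⟨Finsupp.mem_support_iff.mpr hxt, h1⟩)
        rw [hxt, mul_zero]
    · rw [if_neg h1, if_neg (fun h2 : t ∈ G => h1 (Finset.mem_filter.mp h2).2), mul_zero]
  · push_neg at hj
    rw [Tmap_apply_notin hj, Tmap_apply_notin hj, ite_self]

lemma supNorm_Tmap {ε : ℕ → ℝ} {κ : ℕ → ℕ} (hε : ∀ i, ε i = 1 ∨ ε i = -1)
    (hκ : StrictMono κ) (x : C00) : supNorm (Tmap ε κ x) = supNorm x := by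
  have hinj := hκ.injective
  have habs : ∀ t, |ε t| = 1 := fun t => by rcases hε t with h | h <;> simp [h]
  refine le_antisymm (ciSup_le fun j => ?_) (ciSup_le fun t => ?_)
  · by_cases hj : ∃ t, κ t = j
    · obtain ⟨t, rfl⟩ := hj
      rw [Tmap_apply_kappa hinj, abs_mul, habs, one_mul]
      exact abs_le_supNorm x t
    · push_neg at hj
      rw [Tmap_apply_notin hj, abs_zero]
      exact supNorm_nonneg x
  · have h := abs_le_supNorm (Tmap ε κ x) (κ t)
    rwa [Tmap_apply_kappa hinj, abs_mul, habs, one_mul] at h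

/-! #### tnorm lemmas -/

/-- The set whose sup is `tnorm`. -/
def TSet (M : C00 → ℝ) (m : ℕ) (x : C00) : Set ℝ :=
  {r | ∃ F : Fin m → Finset ℕ,
    (∀ i j : Fin m, i < j → FinsetLT (F i) (F j)) ∧
    r = (1 / (m : ℝ)) * ∑ i, M (restr (F i) x)}

lemma tnorm_eq_sSup (M : C00 → ℝ) (m : ℕ) (x : C00) : tnorm M m x = sSup (TSet M m x) := rfl

lemma TSet_zero_mem {M : C00 → ℝ} (h0 : M 0 = 0) (m : ℕ) (x : C00) :
    (0 : ℝ) ∈ TSet M m x := by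
  refine ⟨fun _ => ∅, fun i j _ => ?_, ?_⟩
  · intro a ha; exact absurd ha (Finset.notMem_empty a)
  · simp [restr_empty, h0]

lemma TSet_bound {M : C00 → ℝ} (hle : ∀ y, M y ≤ L1 y) {m : ℕ} {x : C00} :
    ∀ r ∈ TSet M m x, r ≤ (1 / (m : ℝ)) * L1 x := by
  rintro r ⟨F, hF, rfl⟩
  refine mul_le_mul_of_nonneg_left ?_ (by positivity)
  calc ∑ i, M (restr (F i) x) ≤ ∑ i, L1 (restr (F i) x) :=
        Finset.sum_le_sum fun i _ => hle _
    _ ≤ L1 x := L1_restr_sum_le F hF x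

lemma TSet_bdd {M : C00 → ℝ} (hle : ∀ y, M y ≤ L1 y) {m : ℕ} {x : C00} :
    BddAbove (TSet M m x) := ⟨_, fun r hr => TSet_bound hle r hr⟩

lemma tnorm_le {M : C00 → ℝ} (h0 : M 0 = 0) (hle : ∀ y, M y ≤ L1 y) {m : ℕ} {x : C00} :
    tnorm M m x ≤ (1 / (m : ℝ)) * L1 x :=
  csSup_le ⟨0, TSet_zero_mem h0 m x⟩ (TSet_bound hle)

lemma tnorm_nonneg {M : C00 → ℝ} (h0 : M 0 = 0) (hle : ∀ y, M y ≤ L1 y) {m : ℕ} {x : C00} :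
    0 ≤ tnorm M m x := le_csSup (TSet_bdd hle) (TSet_zero_mem h0 m x)

lemma tnorm_zero {M : C00 → ℝ} (h0 : M 0 = 0) (hle : ∀ y, M y ≤ L1 y) (m : ℕ) :
    tnorm M m 0 = 0 := by
  refine le_antisymm (csSup_le ⟨0, TSet_zero_mem h0 m 0⟩ ?_) (tnorm_nonneg h0 hle)
  rintro r ⟨F, hF, rfl⟩
  simp [restr_zero, h0]

lemma tnorm_mono {M M' : C00 → ℝ} (hM0 : M 0 = 0) (hle' : ∀ y, M' y ≤ L1 y)
    (h : ∀ y, M y ≤ M' y) {m : ℕ} {x : C00} : tnorm M m x ≤ tnorm M' m x := by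
  refine csSup_le ⟨0, TSet_zero_mem hM0 m x⟩ ?_
  rintro r ⟨F, hF, rfl⟩
  calc (1 / (m : ℝ)) * ∑ i, M (restr (F i) x)
      ≤ (1 / (m : ℝ)) * ∑ i, M' (restr (F i) x) :=
        mul_le_mul_of_nonneg_left (Finset.sum_le_sum fun i _ => h _) (by positivity)
    _ ≤ tnorm M' m x := le_csSup (TSet_bdd hle') ⟨F, hF, rfl⟩

lemma tnorm_add {M : C00 → ℝ} (h0 : M 0 = 0) (hle : ∀ y, M y ≤ L1 y)
    (hadd : ∀ y z, M (y + z) ≤ M y + M z) {m : ℕ} (x y : C00) :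
    tnorm M m (x + y) ≤ tnorm M m x + tnorm M m y := by
  refine csSup_le ⟨0, TSet_zero_mem h0 m _⟩ ?_
  rintro r ⟨F, hF, rfl⟩
  have h1 : (1 / (m : ℝ)) * ∑ i, M (restr (F i) (x + y)) ≤
      (1 / (m : ℝ)) * ∑ i, M (restr (F i) x) + (1 / (m : ℝ)) * ∑ i, M (restr (F i) y) := by
    rw [← mul_add]
    refine mul_le_mul_of_nonneg_left ?_ (by positivity)
    rw [← Finset.sum_add_distrib]
    refine Finset.sum_le_sum fun i _ => ?_
    rw [restr_add]; exact hadd _ _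
  exact h1.trans (add_le_add (le_csSup (TSet_bdd hle) ⟨F, hF, rfl⟩)
    (le_csSup (TSet_bdd hle) ⟨F, hF, rfl⟩))

lemma tnorm_smul_le {M : C00 → ℝ} (hhom : ∀ (c : ℝ) (y : C00), M (c • y) = |c| * M y)
    (hle : ∀ y, M y ≤ L1 y) {m : ℕ} (c : ℝ) (x : C00) :
    tnorm M m (c • x) ≤ |c| * tnorm M m x := by
  have h0 := hom_zero hhom
  refine csSup_le ⟨0, TSet_zero_mem h0 m _⟩ ?_
  rintro r ⟨F, hF, rfl⟩
  have h1 : (1 / (m : ℝ)) * ∑ i, M (restr (F i) (c • x)) =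
      |c| * ((1 / (m : ℝ)) * ∑ i, M (restr (F i) x)) := by
    rw [Finset.sum_congr rfl (fun i _ => by rw [restr_smul, hhom] :
      ∀ i ∈ Finset.univ, M (restr (F i) (c • x)) = |c| * M (restr (F i) x)),
      ← Finset.mul_sum]
    ring
  rw [h1]
  exact mul_le_mul_of_nonneg_left (le_csSup (TSet_bdd hle) ⟨F, hF, rfl⟩) (abs_nonneg c)

lemma tnorm_smul {M : C00 → ℝ} (hhom : ∀ (c : ℝ) (y : C00), M (c • y) = |c| * M y)
    (hle : ∀ y, M y ≤ L1 y) {m : ℕ} (c : ℝ) (x : C00) :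
    tnorm M m (c • x) = |c| * tnorm M m x := by
  have h0 := hom_zero hhom
  rcases eq_or_ne c 0 with rfl | hc
  · rw [zero_smul, abs_zero, zero_mul, tnorm_zero h0 hle]
  · refine le_antisymm (tnorm_smul_le hhom hle c x) ?_
    have h1 := tnorm_smul_le (m := m) hhom hle c⁻¹ (c • x)
    rw [smul_smul, inv_mul_cancel₀ hc, one_smul, abs_inv] at h1
    calc |c| * tnorm M m x ≤ |c| * (|c|⁻¹ * tnorm M m (c • x)) :=
          mul_le_mul_of_nonneg_left h1 (abs_nonneg c)
      _ = tnorm M m (c • x) := by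
          rw [← mul_assoc, mul_inv_cancel₀ (abs_ne_zero.mpr hc), one_mul]

lemma tnorm_Tmap {M : C00 → ℝ} {ε : ℕ → ℝ} {κ : ℕ → ℕ} (hκ : StrictMono κ)
    (hsym : ∀ y, M (Tmap ε κ y) = M y) (h0 : M 0 = 0) (hle : ∀ y, M y ≤ L1 y)
    (m : ℕ) (x : C00) : tnorm M m (Tmap ε κ x) = tnorm M m x := by
  have hinj := hκ.injective
  refine le_antisymm (csSup_le ⟨0, TSet_zero_mem h0 m _⟩ ?_)
    (csSup_le ⟨0, TSet_zero_mem h0 m _⟩ ?_)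
  · rintro r ⟨F, hF, rfl⟩
    set F' : Fin m → Finset ℕ := fun j => x.support.filter (fun t => κ t ∈ F j) with hF'
    have hlt : ∀ i j : Fin m, i < j → FinsetLT (F' i) (F' j) := by
      intro i j hij a ha b hb
      exact hκ.lt_iff_lt.mp
        (hF i j hij _ (Finset.mem_filter.mp ha).2 _ (Finset.mem_filter.mp hb).2)
    have hval : ∀ i : Fin m, M (restr (F i) (Tmap ε κ x)) = M (restr (F' i) x) := fun i => by
      rw [restr_Tmap hinj, hsym]
    refine le_csSup (TSet_bdd hle) ⟨F', hlt, ?_⟩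
    rw [Finset.sum_congr rfl fun i _ => hval i]
  · rintro r ⟨F, hF, rfl⟩
    set F' : Fin m → Finset ℕ := fun j => (F j).image κ with hF'
    have hlt : ∀ i j : Fin m, i < j → FinsetLT (F' i) (F' j) := by
      intro i j hij a ha b hb
      obtain ⟨s, hs, rfl⟩ := Finset.mem_image.mp ha
      obtain ⟨t, ht, rfl⟩ := Finset.mem_image.mp hb
      exact hκ (hF i j hij s hs t ht)
    have hval : ∀ i : Fin m, M (restr (F' i) (Tmap ε κ x)) = M (restr (F i) x) := by
      intro i
      rw [restr_Tmap hinj, hsym]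
      congr 1
      refine restr_congr fun t hxt => ?_
      simp only [Finset.mem_filter, Finsupp.mem_support_iff]
      constructor
      · rintro ⟨-, hmem⟩
        obtain ⟨s, hs, heq⟩ := Finset.mem_image.mp hmem
        rwa [← hinj heq]
      · intro ht
        exact ⟨hxt, Finset.mem_image_of_mem κ ht⟩
    refine le_csSup (TSet_bdd hle) ⟨F', hlt, ?_⟩
    rw [Finset.sum_congr rfl fun i _ => hval i]
/-! #### PhiN lemmas -/

/-- The set whose sup appears in `PhiN`. -/
def PhiSet (M : C00 → ℝ) (x : C00) : Set ℝ :=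
  {r | ∃ (ℓ : ℕ) (m : Fin ℓ → ℕ) (E : Fin ℓ → Finset ℕ), Admissible ℓ m E ∧
    r = (1 / f ℓ) * ∑ i, tnorm M (m i) (restr (E i) x)}

lemma PhiN_eq (M : C00 → ℝ) (x : C00) :
    PhiN M x = max (supNorm x) (sSup (PhiSet M x)) := rfl

lemma admissible_zero : Admissible 0 (fun i => i.elim0) (fun i => i.elim0) :=
  ⟨fun i => i.elim0, fun a => a.elim0, fun i => i.elim0, fun i => i.elim0⟩

lemma PhiSet_zero_mem (M : C00 → ℝ) (x : C00) : (0 : ℝ) ∈ PhiSet M x :=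
  ⟨0, fun i => i.elim0, fun i => i.elim0, admissible_zero, by simp⟩

lemma PhiSet_bound {M : C00 → ℝ} (h0 : M 0 = 0) (hle : ∀ y, M y ≤ L1 y) {x : C00} :
    ∀ r ∈ PhiSet M x, r ≤ L1 x := by
  rintro r ⟨ℓ, m, E, hAdm, rfl⟩
  rcases Nat.eq_zero_or_pos ℓ with rfl | hℓ
  · simp only [Finset.univ_eq_empty, Finset.sum_empty, mul_zero]
    exact L1_nonneg x
  have hsum : ∑ i, tnorm M (m i) (restr (E i) x) ≤ L1 x := by
    calc ∑ i, tnorm M (m i) (restr (E i) x) ≤ ∑ i, L1 (restr (E i) x) := by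
          refine Finset.sum_le_sum fun i _ => ?_
          have h2 : (2 : ℝ) ≤ (m i : ℝ) := by exact_mod_cast hAdm.1 i
          calc tnorm M (m i) (restr (E i) x) ≤ (1 / (m i : ℝ)) * L1 (restr (E i) x) :=
                tnorm_le h0 hle
            _ ≤ 1 * L1 (restr (E i) x) := by
                refine mul_le_mul_of_nonneg_right ?_ (L1_nonneg _)
                rw [div_le_one (by linarith)]; linarith
            _ = L1 (restr (E i) x) := one_mul _
      _ ≤ L1 x := L1_restr_sum_le E hAdm.2.2.1 x
  have hnn : 0 ≤ ∑ i, tnorm M (m i) (restr (E i) x) :=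
    Finset.sum_nonneg fun i _ => tnorm_nonneg h0 hle
  calc (1 / f ℓ) * ∑ i, tnorm M (m i) (restr (E i) x) ≤ 1 * L1 x :=
        mul_le_mul (one_div_f_le_one ℓ) hsum hnn zero_le_one
    _ = L1 x := one_mul _

lemma PhiSet_bdd {M : C00 → ℝ} (h0 : M 0 = 0) (hle : ∀ y, M y ≤ L1 y) {x : C00} :
    BddAbove (PhiSet M x) := ⟨L1 x, fun r hr => PhiSet_bound h0 hle r hr⟩

lemma supNorm_le_PhiN (M : C00 → ℝ) (x : C00) : supNorm x ≤ PhiN M x := le_max_left _ _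

lemma PhiN_le_L1 {M : C00 → ℝ} (h0 : M 0 = 0) (hle : ∀ y, M y ≤ L1 y) (x : C00) :
    PhiN M x ≤ L1 x :=
  max_le (supNorm_le_L1 x) (csSup_le ⟨0, PhiSet_zero_mem M x⟩ (PhiSet_bound h0 hle))

lemma PhiN_mono {M M' : C00 → ℝ} (hM0 : M 0 = 0) (hM'0 : M' 0 = 0)
    (hle' : ∀ y, M' y ≤ L1 y) (h : ∀ y, M y ≤ M' y) (x : C00) : PhiN M x ≤ PhiN M' x := by
  refine max_le (le_max_left _ _) (le_trans ?_ (le_max_right _ _))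
  refine csSup_le ⟨0, PhiSet_zero_mem M x⟩ ?_
  rintro r ⟨ℓ, m, E, hAdm, rfl⟩
  calc (1 / f ℓ) * ∑ i, tnorm M (m i) (restr (E i) x)
      ≤ (1 / f ℓ) * ∑ i, tnorm M' (m i) (restr (E i) x) :=
        mul_le_mul_of_nonneg_left (Finset.sum_le_sum fun i _ => tnorm_mono hM0 hle' h)
          (one_div_f_nonneg ℓ)
    _ ≤ sSup (PhiSet M' x) := le_csSup (PhiSet_bdd hM'0 hle') ⟨ℓ, m, E, hAdm, rfl⟩

lemma PhiN_zero {M : C00 → ℝ} (h0 : M 0 = 0) (hle : ∀ y, M y ≤ L1 y) : PhiN M 0 = 0 := by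
  have hs : sSup (PhiSet M 0) = 0 := by
    refine le_antisymm (csSup_le ⟨0, PhiSet_zero_mem M 0⟩ ?_)
      (le_csSup (PhiSet_bdd h0 hle) (PhiSet_zero_mem M 0))
    rintro r ⟨ℓ, m, E, hAdm, rfl⟩
    have hterm : ∀ i : Fin ℓ, tnorm M (m i) (restr (E i) (0 : C00)) = 0 := fun i => by
      rw [restr_zero, tnorm_zero h0 hle]
    rw [Finset.sum_congr rfl fun i _ => hterm i]
    simp
  rw [PhiN_eq, supNorm_zero, hs, max_self]

lemma PhiN_add {M : C00 → ℝ} (h0 : M 0 = 0) (hle : ∀ y, M y ≤ L1 y)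
    (hadd : ∀ y z, M (y + z) ≤ M y + M z) (x y : C00) :
    PhiN M (x + y) ≤ PhiN M x + PhiN M y := by
  refine max_le ((supNorm_add x y).trans
    (add_le_add (le_max_left _ _) (le_max_left _ _))) ?_
  refine csSup_le ⟨0, PhiSet_zero_mem M _⟩ ?_
  rintro r ⟨ℓ, m, E, hAdm, rfl⟩
  have h1 : (1 / f ℓ) * ∑ i, tnorm M (m i) (restr (E i) (x + y)) ≤
      (1 / f ℓ) * ∑ i, tnorm M (m i) (restr (E i) x) +
      (1 / f ℓ) * ∑ i, tnorm M (m i) (restr (E i) y) := by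
    rw [← mul_add]
    refine mul_le_mul_of_nonneg_left ?_ (one_div_f_nonneg ℓ)
    rw [← Finset.sum_add_distrib]
    refine Finset.sum_le_sum fun i _ => ?_
    rw [restr_add]
    exact tnorm_add h0 hle hadd _ _
  refine h1.trans (add_le_add ?_ ?_)
  · exact (le_csSup (PhiSet_bdd h0 hle) ⟨ℓ, m, E, hAdm, rfl⟩).trans (le_max_right _ _)
  · exact (le_csSup (PhiSet_bdd h0 hle) ⟨ℓ, m, E, hAdm, rfl⟩).trans (le_max_right _ _)

lemma PhiN_smul {M : C00 → ℝ} (hhom : ∀ (c : ℝ) (y : C00), M (c • y) = |c| * M y)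
    (hle : ∀ y, M y ≤ L1 y) (c : ℝ) (x : C00) : PhiN M (c • x) = |c| * PhiN M x := by
  have h0 := hom_zero hhom
  have key : ∀ (c : ℝ) (x : C00), PhiN M (c • x) ≤ |c| * PhiN M x := by
    intro c x
    refine max_le ?_ ?_
    · rw [supNorm_smul]
      exact mul_le_mul_of_nonneg_left (le_max_left _ _) (abs_nonneg c)
    · refine csSup_le ⟨0, PhiSet_zero_mem M _⟩ ?_
      rintro r ⟨ℓ, m, E, hAdm, rfl⟩
      have h1 : (1 / f ℓ) * ∑ i, tnorm M (m i) (restr (E i) (c • x)) =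
          |c| * ((1 / f ℓ) * ∑ i, tnorm M (m i) (restr (E i) x)) := by
        rw [Finset.sum_congr rfl (fun i _ => by rw [restr_smul, tnorm_smul hhom hle] :
          ∀ i ∈ Finset.univ, tnorm M (m i) (restr (E i) (c • x)) =
            |c| * tnorm M (m i) (restr (E i) x)), ← Finset.mul_sum]
        ring
      rw [h1]
      refine mul_le_mul_of_nonneg_left ?_ (abs_nonneg c)
      exact (le_csSup (PhiSet_bdd h0 hle) ⟨ℓ, m, E, hAdm, rfl⟩).trans (le_max_right _ _)
  rcases eq_or_ne c 0 with rfl | hc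
  · rw [zero_smul, abs_zero, zero_mul, PhiN_zero h0 hle]
  · refine le_antisymm (key c x) ?_
    have h1 := key c⁻¹ (c • x)
    rw [smul_smul, inv_mul_cancel₀ hc, one_smul, abs_inv] at h1
    calc |c| * PhiN M x ≤ |c| * (|c|⁻¹ * PhiN M (c • x)) :=
          mul_le_mul_of_nonneg_left h1 (abs_nonneg c)
      _ = PhiN M (c • x) := by
          rw [← mul_assoc, mul_inv_cancel₀ (abs_ne_zero.mpr hc), one_mul]

lemma PhiN_Tmap {M : C00 → ℝ} {ε : ℕ → ℝ} {κ : ℕ → ℕ} (hε : ∀ i, ε i = 1 ∨ ε i = -1)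
    (hκ : StrictMono κ) (hsym : ∀ y, M (Tmap ε κ y) = M y) (h0 : M 0 = 0)
    (hle : ∀ y, M y ≤ L1 y) (x : C00) : PhiN M (Tmap ε κ x) = PhiN M x := by
  have hinj := hκ.injective
  have main : ∀ (x : C00), sSup (PhiSet M (Tmap ε κ x)) ≤ sSup (PhiSet M x) := by
    intro x
    refine csSup_le ⟨0, PhiSet_zero_mem M _⟩ ?_
    rintro r ⟨ℓ, m, E, hAdm, rfl⟩
    set E' : Fin ℓ → Finset ℕ := fun i => x.support.filter (fun t => κ t ∈ E i) with hE'
    have hAdm' : Admissible ℓ m E' := by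
      obtain ⟨h1, h2, h3, h4⟩ := hAdm
      refine ⟨h1, h2, ?_, ?_⟩
      · intro i j hij a ha b hb
        exact hκ.lt_iff_lt.mp
          (h3 i j hij _ (Finset.mem_filter.mp ha).2 _ (Finset.mem_filter.mp hb).2)
      · intro i j hij
        refine lt_of_le_of_lt ?_ (h4 i j hij)
        refine Finset.sum_le_sum fun t _ => ?_
        have hcard : (E' t).card ≤ (E t).card :=
          Finset.card_le_card_of_injOn κ (fun a ha => (Finset.mem_filter.mp ha).2)
            (fun a _ b _ hab => hinj hab)
        exact_mod_cast hcard
    have hval : ∀ i : Fin ℓ, tnorm M (m i) (restr (E i) (Tmap ε κ x)) =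
        tnorm M (m i) (restr (E' i) x) := fun i => by
      rw [restr_Tmap hinj, tnorm_Tmap hκ hsym h0 hle]
    refine le_csSup (PhiSet_bdd h0 hle) ⟨ℓ, m, E', hAdm', ?_⟩
    rw [Finset.sum_congr rfl fun i _ => hval i]
  have main2 : ∀ (x : C00), sSup (PhiSet M x) ≤ sSup (PhiSet M (Tmap ε κ x)) := by
    intro x
    refine csSup_le ⟨0, PhiSet_zero_mem M _⟩ ?_
    rintro r ⟨ℓ, m, E, hAdm, rfl⟩
    set E' : Fin ℓ → Finset ℕ := fun i => (E i).image κ with hE'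
    have hAdm' : Admissible ℓ m E' := by
      obtain ⟨h1, h2, h3, h4⟩ := hAdm
      refine ⟨h1, h2, ?_, ?_⟩
      · intro i j hij a ha b hb
        obtain ⟨s, hs, rfl⟩ := Finset.mem_image.mp ha
        obtain ⟨t, ht, rfl⟩ := Finset.mem_image.mp hb
        exact hκ (h3 i j hij s hs t ht)
      · intro i j hij
        refine lt_of_le_of_lt (le_of_eq ?_) (h4 i j hij)
        refine Finset.sum_congr rfl fun t _ => ?_
        have : (E' t).card = (E t).card := Finset.card_image_of_injective _ hinj
        rw [this]
    have hval : ∀ i : Fin ℓ, tnorm M (m i) (restr (E' i) (Tmap ε κ x)) =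
        tnorm M (m i) (restr (E i) x) := by
      intro i
      rw [restr_Tmap hinj, tnorm_Tmap hκ hsym h0 hle]
      congr 1
      refine restr_congr fun t hxt => ?_
      simp only [Finset.mem_filter, Finsupp.mem_support_iff]
      constructor
      · rintro ⟨-, hmem⟩
        obtain ⟨s, hs, heq⟩ := Finset.mem_image.mp hmem
        rwa [← hinj heq]
      · intro ht
        exact ⟨hxt, Finset.mem_image_of_mem κ ht⟩
    refine le_csSup (PhiSet_bdd h0 hle) ⟨ℓ, m, E', hAdm', ?_⟩
    rw [Finset.sum_congr rfl fun i _ => hval i]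
  rw [PhiN_eq, PhiN_eq, supNorm_Tmap hε hκ, le_antisymm (main x) (main2 x)]
/-! #### The family `S` of good post-fixed points and its supremum `NN` -/

/-- Membership in the family of "good" functions below the fixed point. -/
def Smem (M : C00 → ℝ) : Prop :=
  (∀ x, supNorm x ≤ M x) ∧ (∀ x, M x ≤ L1 x) ∧
  (∀ x y, M (x + y) ≤ M x + M y) ∧
  (∀ (c : ℝ) (x : C00), M (c • x) = |c| * M x) ∧
  (∀ (x : C00) (ε : ℕ → ℝ) (κ : ℕ → ℕ), (∀ i, ε i = 1 ∨ ε i = -1) → StrictMono κ →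
    M (Tmap ε κ x) = M x) ∧
  (∀ x, M x ≤ PhiN M x)

lemma supNorm_Smem : Smem supNorm :=
  ⟨fun _ => le_refl _, supNorm_le_L1, supNorm_add, supNorm_smul,
    fun x ε κ hε hκ => supNorm_Tmap hε hκ x, fun x => le_max_left _ _⟩

/-- The candidate norm: pointwise supremum of the family. -/
noncomputable def NN (x : C00) : ℝ := sSup {y | ∃ M, Smem M ∧ y = M x}

lemma NSet_nonempty (x : C00) : {y | ∃ M, Smem M ∧ y = M x}.Nonempty :=
  ⟨supNorm x, supNorm, supNorm_Smem, rfl⟩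

lemma NSet_bdd (x : C00) : BddAbove {y | ∃ M, Smem M ∧ y = M x} :=
  ⟨L1 x, by rintro y ⟨M, hM, rfl⟩; exact hM.2.1 x⟩

lemma le_NN {M : C00 → ℝ} (hM : Smem M) (x : C00) : M x ≤ NN x :=
  le_csSup (NSet_bdd x) ⟨M, hM, rfl⟩

lemma NN_le {x : C00} {a : ℝ} (h : ∀ M, Smem M → M x ≤ a) : NN x ≤ a :=
  csSup_le (NSet_nonempty x) (by rintro y ⟨M, hM, rfl⟩; exact h M hM)

lemma supNorm_le_NN (x : C00) : supNorm x ≤ NN x := le_NN supNorm_Smem x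

lemma NN_le_L1 (x : C00) : NN x ≤ L1 x := NN_le fun M hM => hM.2.1 x

lemma NN_zero : NN 0 = 0 := by
  refine le_antisymm (NN_le fun M hM => le_of_eq (hom_zero hM.2.2.2.1)) ?_
  have h := supNorm_le_NN 0
  rwa [supNorm_zero] at h

lemma NN_add (x y : C00) : NN (x + y) ≤ NN x + NN y :=
  NN_le fun M hM => (hM.2.2.1 x y).trans (add_le_add (le_NN hM x) (le_NN hM y))

lemma NN_smul (c : ℝ) (x : C00) : NN (c • x) = |c| * NN x := by
  have key : ∀ (c : ℝ) (x : C00), NN (c • x) ≤ |c| * NN x := fun c x =>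
    NN_le fun M hM => by
      rw [hM.2.2.2.1 c x]
      exact mul_le_mul_of_nonneg_left (le_NN hM x) (abs_nonneg c)
  rcases eq_or_ne c 0 with rfl | hc
  · rw [zero_smul, NN_zero, abs_zero, zero_mul]
  · refine le_antisymm (key c x) ?_
    have h1 := key c⁻¹ (c • x)
    rw [smul_smul, inv_mul_cancel₀ hc, one_smul, abs_inv] at h1
    calc |c| * NN x ≤ |c| * (|c|⁻¹ * NN (c • x)) :=
          mul_le_mul_of_nonneg_left h1 (abs_nonneg c)
      _ = NN (c • x) := by
          rw [← mul_assoc, mul_inv_cancel₀ (abs_ne_zero.mpr hc), one_mul]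

lemma NN_Tmap (x : C00) (ε : ℕ → ℝ) (κ : ℕ → ℕ) (hε : ∀ i, ε i = 1 ∨ ε i = -1)
    (hκ : StrictMono κ) : NN (Tmap ε κ x) = NN x := by
  refine le_antisymm (NN_le fun M hM => ?_) (NN_le fun M hM => ?_)
  · rw [hM.2.2.2.2.1 x ε κ hε hκ]
    exact le_NN hM x
  · rw [← hM.2.2.2.2.1 x ε κ hε hκ]
    exact le_NN hM (Tmap ε κ x)

lemma NN_le_PhiN (x : C00) : NN x ≤ PhiN NN x :=
  NN_le fun M hM => (hM.2.2.2.2.2 x).trans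
    (PhiN_mono (hom_zero hM.2.2.2.1) NN_zero NN_le_L1 (fun y => le_NN hM y) x)

lemma Smem_PhiN_NN : Smem (PhiN NN) := by
  refine ⟨supNorm_le_PhiN NN, PhiN_le_L1 NN_zero NN_le_L1,
    PhiN_add NN_zero NN_le_L1 NN_add, PhiN_smul NN_smul NN_le_L1, ?_, ?_⟩
  · intro x ε κ hε hκ
    exact PhiN_Tmap hε hκ (fun y => NN_Tmap y ε κ hε hκ) NN_zero NN_le_L1 x
  · intro x
    exact PhiN_mono NN_zero (PhiN_zero NN_zero NN_le_L1)
      (PhiN_le_L1 NN_zero NN_le_L1) NN_le_PhiN x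

lemma NN_fixed (x : C00) : NN x = PhiN NN x :=
  le_antisymm (NN_le_PhiN x) (le_NN Smem_PhiN_NN x)

lemma NN_single (i : ℕ) : NN (Finsupp.single i (1 : ℝ)) = 1 := by
  refine le_antisymm ((NN_le_L1 _).trans_eq (L1_single i)) ?_
  have h := supNorm_le_NN (Finsupp.single i (1 : ℝ))
  rwa [supNorm_single] at h
/-- existence of a 1-unconditional, 1-subsymmetric norm satisfying (2.2). -/
theorem statement7 :
    ∃ N : C00 → ℝ, IsNorm N ∧ Eq22 N ∧
      (∀ i, N (Finsupp.single i (1 : ℝ)) = 1) ∧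
      (∀ (x : C00) (ε : ℕ → ℝ) (κ : ℕ → ℕ), (∀ i, ε i = 1 ∨ ε i = -1) → StrictMono κ →
        N (∑ i ∈ x.support, (ε i * x i) • Finsupp.single (κ i) (1 : ℝ)) = N x) := by

  refine ⟨NN, ⟨NN_add, NN_smul, fun x hx => lt_of_lt_of_le (supNorm_pos hx) (supNorm_le_NN x)⟩,
    fun x => NN_fixed x, NN_single, fun x ε κ hε hκ => NN_Tmap x ε κ hε hκ⟩
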